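/- Let x̃₀, …, x̃_m be points of ℝᵖ, let Δ̃ be the convex hull of {x̃₀, …, x̃_m}, and for each k = 0, …, m let Δ_k := {2x̃_k − x : x ∈ Δ̃} be the reflection of Δ̃ through x̃_k. If x*_k ∈ Δ_k for each k = 0, …, m, then Δ̃ ⊆ conv{x*_0, …, x*_m}. -/

import Mathlib

/-- key convex-geometry step in the proofs of the paper's Lemma A.5
and Lemma A.6'. Let `Δ̃` be the convex hull of points `x̃₀, …, x̃_m` of `ℝᵖ`, and let
`Δ_k` be the reflection of `Δ̃` through `x̃_k`. If `x*_k ∈ Δ_k` for each `k`, then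
`Δ̃ ⊆ conv{x*₀, …, x*_m}`. -/
theorem stmt16 (p m : ℕ)
    (xt : Fin (m + 1) → EuclideanSpace ℝ (Fin p))
    (xs : Fin (m + 1) → EuclideanSpace ℝ (Fin p))
    (hxs : ∀ k : Fin (m + 1),
      xs k ∈ (fun x => (2 : ℝ) • xt k - x) '' (convexHull ℝ (Set.range xt))) :
    convexHull ℝ (Set.range xt) ⊆ convexHull ℝ (Set.range xs) := by
  intro z hz
  by_contra hzC
  -- conv(xs) is closed
  have hfin : (Set.range xs).Finite := Set.finite_range xs
  have hcl : IsClosed (convexHull ℝ (Set.range xs)) :=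
    (hfin.isCompact_convexHull (𝕜 := ℝ)).isClosed
  obtain ⟨f, u, hfu⟩ := geometric_hahn_banach_closed_point
    (convex_convexHull ℝ (Set.range xs)) hcl hzC
  -- choose k maximizing f (xt k)
  obtain ⟨k, -, hk⟩ := Finset.exists_max_image (Finset.univ : Finset (Fin (m + 1)))
    (fun j => f (xt j)) ⟨0, Finset.mem_univ 0⟩
  set M := f (xt k) with hM
  -- conv(xt) ⊆ {x | f x ≤ M}
  have hhalf : convexHull ℝ (Set.range xt) ⊆ {x | f x ≤ M} := by
    apply convexHull_min _ (convex_halfSpace_le (f.toLinearMap.isLinear) M)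
    rintro x ⟨j, rfl⟩
    exact hk j (Finset.mem_univ j)
  -- f z ≤ M
  have hzM : f z ≤ M := hhalf hz
  obtain ⟨y, hy, hyk⟩ := hxs k
  have hyM : f y ≤ M := hhalf hy
  have hfxs : f (xs k) = 2 * M - f y := by
    rw [← hyk]
    simp [map_sub, map_smul, hM, two_mul]
  have h1 : f (xs k) < u := hfu.1 (xs k) (subset_convexHull ℝ _ ⟨k, rfl⟩)
  have h2 : u < f z := hfu.2
  linarith
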